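/- arXiv:1903.11541 — 3 statements merged into one kernel-verified Lean document; each statement's English description precedes it below -/
import Mathlib

section
/- For 0 ≤ j < n and j+1 ≤ k ≤ n, the intersection L_k ∩ R_{n,j} is contained in the intersection of the k−j+1 hyperplanes L_j, H_{j+1}, ..., H_k of ℙ^n, which are linearly independent; consequently the real dimension of L_k ∩ R_{n,j} is at most 2n + j − n − 2 − (k−j), strictly less than dim R_{n,j} − 2 = n + j − 2 when k > j, so the current intersection ⟦L_k⟧ ∩ ⟦R_{n,j}⟧ vanishes. -/
/-- For `0 ≤ j < n` and `j+1 ≤ k ≤ n`, every point of `L_k ∩ R_{n,j}`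
(in homogeneous coordinates on `ℙ^n`, i.e. on the affine cone) lies in the common zero set
of the `k−j+1` hyperplanes `L_j, H_{j+1}, ..., H_k`, and the corresponding `k−j+1` linear
forms `ε_j, z_{j+1}, ..., z_k` are linearly independent.  (Consequently the semi-algebraic
intersection has real codimension at least `k−j+1` more than a hyperplane section of
`R_{n,j}`, so the current intersection `⟦L_k⟧ ∩ ⟦R_{n,j}⟧` vanishes.) -/
theorem stmt_3 (n j k : ℕ) (hjn : j < n) (hjk : j + 1 ≤ k) (hkn : k ≤ n) :
    (∀ z : Fin (n+1) → ℂ,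
      (∑ i : Fin (n+1), if (i : ℕ) ≤ k then z i else 0) = 0 →
      (∀ r : Fin (n+1), j + 1 ≤ (r : ℕ) → (r : ℕ) ≤ n →
        ∃ t : ℝ, 0 ≤ t ∧ t ≤ 1 ∧
          z r = (t : ℂ) * ∑ i : Fin (n+1), if (i : ℕ) ≤ (r : ℕ) then z i else 0) →
      ((∑ i : Fin (n+1), if (i : ℕ) ≤ j then z i else 0) = 0 ∧
        ∀ r : Fin (n+1), j + 1 ≤ (r : ℕ) → (r : ℕ) ≤ k → z r = 0)) ∧
    LinearIndependent ℂ (fun m : Fin (k - j + 1) =>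
      if (m : ℕ) = 0 then
        ∑ i : Fin (j+1), (LinearMap.proj (Fin.castLE (by omega) i) :
          (Fin (n+1) → ℂ) →ₗ[ℂ] ℂ)
      else (LinearMap.proj ⟨j + (m : ℕ), by have := m.isLt; omega⟩ :
          (Fin (n+1) → ℂ) →ₗ[ℂ] ℂ)) := by
  constructor
  · intro z hk hS
    set E : ℕ → ℂ := fun r => ∑ i : Fin (n+1), if (i : ℕ) ≤ r then z i else 0 with hE
    have step : ∀ (r : ℕ) (hr : r < n + 1), 1 ≤ r → E r = E (r-1) + z ⟨r, hr⟩ := by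
      intro r hr h1
      have hsplit : ∀ i : Fin (n+1), (if (i:ℕ) ≤ r then z i else 0)
          = (if (i:ℕ) ≤ r-1 then z i else 0)
            + (if i = (⟨r, hr⟩ : Fin (n+1)) then z i else 0) := by
        intro i
        by_cases ha : (i:ℕ) ≤ r - 1
        · have hb : (i:ℕ) ≤ r := by omega
          have hne : i ≠ (⟨r, hr⟩ : Fin (n+1)) := by
            intro h; rw [Fin.ext_iff] at h; simp at h; omega
          simp [ha, hb, hne]
        · by_cases hb : (i:ℕ) ≤ r
          · have heq : i = (⟨r, hr⟩ : Fin (n+1)) := by rw [Fin.ext_iff]; simp; omega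
            have hna : ¬ (r ≤ r - 1) := by omega
            subst heq
            simp [hb, hna]
          · have hne : i ≠ (⟨r, hr⟩ : Fin (n+1)) := by
              intro h; rw [Fin.ext_iff] at h; simp at h; omega
            simp [ha, hb, hne]
      calc E r = ∑ i : Fin (n+1), ((if (i:ℕ) ≤ r-1 then z i else 0)
            + (if i = (⟨r, hr⟩ : Fin (n+1)) then z i else 0)) :=
            Finset.sum_congr rfl (fun i _ => hsplit i)
        _ = E (r-1) + z ⟨r, hr⟩ := by
            rw [Finset.sum_add_distrib, Finset.sum_ite_eq' Finset.univ]
            simp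
            rfl
    have zval : ∀ (r : ℕ) (hr : r < n + 1), j + 1 ≤ r → r ≤ n → E r = 0 →
        z ⟨r, hr⟩ = 0 := by
      intro r hr h1 h2 hEr
      obtain ⟨t, _, _, hz⟩ := hS ⟨r, hr⟩ h1 h2
      rw [hz]
      show (t:ℂ) * E r = 0
      rw [hEr, mul_zero]
    have aux : ∀ d, d ≤ k - j → E (k - d) = 0 := by
      intro d
      induction d with
      | zero => intro _; simpa using hk
      | succ d ih =>
        intro hd
        have hEr : E (k - d) = 0 := ih (by omega)
        have hlt : k - d < n + 1 := by omega
        have hzr : z ⟨k - d, hlt⟩ = 0 := zval (k-d) hlt (by omega) (by omega) hEr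
        have hstep := step (k - d) hlt (by omega)
        rw [hEr, hzr, add_zero] at hstep
        rw [show k - (d+1) = k - d - 1 by omega]
        exact hstep.symm
    have hEr' : ∀ r : ℕ, j ≤ r → r ≤ k → E r = 0 := by
      intro r h1 h2
      have := aux (k - r) (by omega)
      rwa [show k - (k - r) = r by omega] at this
    refine ⟨hEr' j le_rfl (by omega), ?_⟩
    intro r hr1 hr2
    have := zval (r:ℕ) r.isLt hr1 (by omega) (hEr' (r:ℕ) (by omega) hr2)
    simpa using this
  · rw [Fintype.linearIndependent_iff]
    intro g hg m
    by_cases hm : (m : ℕ) = 0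
    · have h0 := LinearMap.congr_fun hg (Pi.single (0 : Fin (n+1)) (1:ℂ))
      simp only [LinearMap.sum_apply, LinearMap.smul_apply, smul_eq_mul,
        apply_ite (fun f : (Fin (n+1) → ℂ) →ₗ[ℂ] ℂ => f (Pi.single (0 : Fin (n+1)) (1:ℂ))),
        LinearMap.proj_apply, LinearMap.coe_sum, Finset.sum_apply,
        Pi.single_apply, LinearMap.zero_apply] at h0
      simp only [Fin.ext_iff, Fin.coe_castLE, Fin.val_zero, Nat.add_eq_zero,
        mul_ite, mul_one, mul_zero] at h0
      have hinner : (∑ x : Fin (j+1), if (x:ℕ) = 0 then (1:ℂ) else 0) = 1 := by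
        simp only [show ∀ x : Fin (j+1), ((x:ℕ) = 0) = (x = 0) from
          fun x => by rw [Fin.ext_iff, Fin.val_zero]]
        simp
      have hbody : ∀ x : Fin (k-j+1),
          (if (x:ℕ) = 0 then g x * (∑ x : Fin (j+1), if (x:ℕ) = 0 then (1:ℂ) else 0)
            else if j = 0 ∧ (x:ℕ) = 0 then g x else 0)
          = if x = (⟨0, by omega⟩ : Fin (k-j+1)) then g x else 0 := by
        intro x
        by_cases hx : (x:ℕ) = 0 <;> simp [hx, hinner, Fin.ext_iff, -Fin.val_eq_zero_iff]
      rw [Finset.sum_congr rfl (fun x _ => hbody x),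
        Finset.sum_ite_eq' Finset.univ (⟨0, by omega⟩ : Fin (k-j+1)) g] at h0
      simp only [Finset.mem_univ, if_true] at h0
      have hm0 : m = ⟨0, by omega⟩ := Fin.ext hm
      rw [hm0]; exact h0
    · have hlt : j + (m:ℕ) < n + 1 := by have := m.isLt; omega
      have h0 := LinearMap.congr_fun hg (Pi.single (⟨j + (m:ℕ), hlt⟩ : Fin (n+1)) (1:ℂ))
      simp only [LinearMap.sum_apply, LinearMap.smul_apply, smul_eq_mul,
        apply_ite (fun f : (Fin (n+1) → ℂ) →ₗ[ℂ] ℂ =>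
          f (Pi.single (⟨j + (m:ℕ), hlt⟩ : Fin (n+1)) (1:ℂ))),
        LinearMap.proj_apply, LinearMap.coe_sum, Finset.sum_apply,
        Pi.single_apply, LinearMap.zero_apply] at h0
      have hbody : ∀ x : Fin (k-j+1),
          (g x * if (x:ℕ) = 0 then
              (∑ x' : Fin (j+1), if Fin.castLE (by omega) x'
                = (⟨j + (m:ℕ), hlt⟩ : Fin (n+1)) then (1:ℂ) else 0)
            else if (⟨j + (x:ℕ), by have := x.isLt; omega⟩ : Fin (n+1))
                = (⟨j + (m:ℕ), hlt⟩ : Fin (n+1)) then (1:ℂ) else 0)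
          = if x = m then g x else 0 := by
        intro x
        by_cases hx : (x:ℕ) = 0
        · have hxm : x ≠ m := by intro h; rw [h] at hx; exact hm hx
          have hz : ∀ x' : Fin (j+1),
              Fin.castLE (by omega : j+1 ≤ n+1) x' ≠ (⟨j + (m:ℕ), hlt⟩ : Fin (n+1)) := by
            intro x' h; rw [Fin.ext_iff] at h; simp at h; have := x'.isLt; omega
          simp [hx, hxm, hz]
        · simp [hx, Fin.ext_iff, add_right_inj]
      rw [Finset.sum_congr rfl (fun x _ => hbody x),
        Finset.sum_ite_eq' Finset.univ m g] at h0
      simpa using h0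
end

section
/- Every proper Zariski closed subset Z ⊊ ℙ^n has measure zero with respect to the measure ‖R_{n,j}‖ associated to the semi-algebraic integral current ⟦R_{n,j}⟧, for all 0 ≤ j ≤ n. In particular, since R_{n,j} contains the real topological simplex Δ̂^n, R_{n,j} is Zariski dense in ℙ^n, and Z ∩ R_{n,j} is a semi-algebraic subset of dimension strictly less than n + j = dim_ℝ R_{n,j}. -/
open MeasureTheory

namespace Stmt4Aux

open MvPolynomial Finset

noncomputable section


/-! ### Truncated sums -/

def SIf {M : Type*} [AddCommMonoid M] {N : ℕ} (f : Fin N → M) (q : ℕ) : M :=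
  ∑ i : Fin N, if (i : ℕ) ≤ q then f i else 0

lemma SIf_top {M : Type*} [AddCommMonoid M] {n : ℕ} (f : Fin (n+1) → M) :
    SIf f n = ∑ i, f i := by
  unfold SIf
  refine Finset.sum_congr rfl fun i _ => ?_
  rw [if_pos (Nat.lt_succ_iff.mp i.isLt)]

lemma SIf_succ {M : Type*} [AddCommMonoid M] {n : ℕ} (f : Fin (n+1) → M) {q : ℕ} (hq : q < n) :
    SIf f (q+1) = SIf f q + f ⟨q+1, by omega⟩ := by
  unfold SIf
  have key : ∀ i : Fin (n+1), (if (i:ℕ) ≤ q+1 then f i else 0)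
      = (if (i:ℕ) ≤ q then f i else 0) + (if i = ⟨q+1, by omega⟩ then f i else 0) := by
    intro i
    by_cases h1 : (i:ℕ) ≤ q
    · rw [if_pos (by omega), if_pos h1, if_neg, add_zero]
      intro hh
      have : (i:ℕ) = q+1 := by rw [hh]
      omega
    · by_cases h2 : (i:ℕ) = q+1
      · have hi : i = ⟨q+1, by omega⟩ := Fin.ext h2
        rw [if_pos (by omega), if_neg h1, if_pos hi, zero_add]
      · rw [if_neg (by omega), if_neg h1, if_neg, add_zero]
        intro hh
        apply h2
        rw [hh]
  rw [Finset.sum_congr rfl (fun i _ => key i), Finset.sum_add_distrib,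
    Finset.sum_ite_eq' Finset.univ _ f]
  simp

lemma SIf_split0 {M : Type*} [AddCommMonoid M] {n : ℕ} (f : Fin (n+1) → M) (q : ℕ) :
    SIf f q = f 0 + ∑ i : Fin (n+1), if 1 ≤ (i:ℕ) ∧ (i:ℕ) ≤ q then f i else 0 := by
  unfold SIf
  have key : ∀ i : Fin (n+1), (if (i:ℕ) ≤ q then f i else 0)
      = (if i = 0 then f i else 0) + (if 1 ≤ (i:ℕ) ∧ (i:ℕ) ≤ q then f i else 0) := by
    intro i
    by_cases h0 : i = 0
    · subst h0
      rw [if_pos rfl, if_pos (by simp), if_neg (by simp), add_zero]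
    · have h1 : 1 ≤ (i:ℕ) := by
        rcases Nat.eq_zero_or_pos (i:ℕ) with h|h
        · exact absurd (Fin.ext (by simp [h]) : i = 0) h0
        · omega
      rw [if_neg h0, zero_add]
      by_cases h2 : (i:ℕ) ≤ q
      · rw [if_pos h2, if_pos ⟨h1, h2⟩]
      · rw [if_neg h2, if_neg (by tauto)]
  rw [Finset.sum_congr rfl (fun i _ => key i), Finset.sum_add_distrib,
    Finset.sum_ite_eq' Finset.univ _ f]
  simp

lemma SIf_line {n : ℕ} (z c : Fin (n+1) → ℂ) (s : ℂ) (q : ℕ) :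
    SIf (fun i => z i + c i * s) q = SIf z q + SIf c q * s := by
  unfold SIf
  rw [Finset.sum_mul, ← Finset.sum_add_distrib]
  refine Finset.sum_congr rfl fun i _ => ?_
  split <;> simp

lemma SIf_delta {n : ℕ} (a q : ℕ) (ha : a ≤ n) :
    SIf (fun i : Fin (n+1) => if (i:ℕ) = a then (1:ℂ) else 0) q
      = if a ≤ q then 1 else 0 := by
  unfold SIf
  have key : ∀ i : Fin (n+1),
      (if (i:ℕ) ≤ q then (if (i:ℕ) = a then (1:ℂ) else 0) else 0)
      = if i = ⟨a, by omega⟩ then (if a ≤ q then (1:ℂ) else 0) else 0 := by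
    intro i
    by_cases h : i = ⟨a, by omega⟩
    · subst h
      simp only [if_pos rfl]
      by_cases h2 : a ≤ q <;> simp [h2]
    · have : (i:ℕ) ≠ a := fun hh => h (Fin.ext hh)
      rw [if_neg h]
      split <;> simp [this]
  rw [Finset.sum_congr rfl (fun i _ => key i), Finset.sum_ite_eq' Finset.univ]
  simp

lemma SIf_sub {n : ℕ} (f g : Fin (n+1) → ℂ) (q : ℕ) :
    SIf (fun i => f i - g i) q = SIf f q - SIf g q := by
  unfold SIf
  rw [← Finset.sum_sub_distrib]
  refine Finset.sum_congr rfl fun i _ => ?_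
  split <;> simp



/-- evaluation of an `MvPolynomial` along a polynomial path -/
lemma eval_line {m : ℕ} (g : Fin m → Polynomial ℂ) (P : MvPolynomial (Fin m) ℂ) (s : ℂ) :
    Polynomial.eval s (MvPolynomial.eval₂ Polynomial.C g P)
      = eval (fun i => (g i).eval s) P := by
  show Polynomial.evalRingHom s (MvPolynomial.eval₂ Polynomial.C g P) = _
  rw [MvPolynomial.eval₂_comp_left (Polynomial.evalRingHom s) Polynomial.C g P]
  have h1 : (Polynomial.evalRingHom s).comp Polynomial.C = RingHom.id ℂ := by
    ext x
    simp
  rw [h1]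
  rfl

lemma eval_line_zero {m : ℕ} (g : Fin m → Polynomial ℂ) (P : MvPolynomial (Fin m) ℂ)
    (T : Set ℂ) (hT : T.Infinite)
    (h : ∀ s ∈ T, eval (fun i => (g i).eval s) P = 0) (s₀ : ℂ) :
    eval (fun i => (g i).eval s₀) P = 0 := by
  have hp : MvPolynomial.eval₂ Polynomial.C g P = 0 := by
    apply Polynomial.eq_zero_of_infinite_isRoot
    apply hT.mono
    intro s hs
    simp only [Set.mem_setOf_eq, Polynomial.IsRoot, eval_line]
    exact h s hs
  rw [← eval_line, hp, Polynomial.eval_zero]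

/-- composite evaluation -/
lemma eval_comp {m N : ℕ} (Φ : Fin N → MvPolynomial (Fin m) ℂ)
    (P : MvPolynomial (Fin N) ℂ) (v : Fin m → ℂ) :
    eval v (MvPolynomial.eval₂ C Φ P) = eval (fun r => eval v (Φ r)) P := by
  show MvPolynomial.eval v (MvPolynomial.eval₂ C Φ P) = _
  rw [MvPolynomial.eval₂_comp_left (MvPolynomial.eval v) C Φ P]
  have h1 : (MvPolynomial.eval v).comp (C : ℂ →+* MvPolynomial (Fin m) ℂ) = RingHom.id ℂ := by
    ext x
    simp
  rw [h1]
  rfl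

/-- a complex `MvPolynomial` vanishing at all real points is zero -/
lemma eq_zero_of_forall_real : ∀ {m : ℕ} (Q : MvPolynomial (Fin m) ℂ),
    (∀ w : Fin m → ℝ, eval (fun k => ((w k : ℝ) : ℂ)) Q = 0) → Q = 0 := by
  intro m
  induction m with
  | zero =>
    intro Q h
    have h0 := h (fun _ => 0)
    rw [eq_C_of_isEmpty Q] at h0 ⊢
    rw [eval_C] at h0
    rw [h0, map_zero]
  | succ m ih =>
    intro Q h
    have hq : finSuccEquiv ℂ m Q = 0 := by
      apply Polynomial.ext
      intro k
      rw [Polynomial.coeff_zero]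
      apply ih
      intro w
      -- the one-variable polynomial obtained by mapping coefficients
      set pw := Polynomial.map (MvPolynomial.eval (fun k => ((w k : ℝ) : ℂ)))
        (finSuccEquiv ℂ m Q) with hpw
      have hpw0 : pw = 0 := by
        apply Polynomial.eq_zero_of_infinite_isRoot
        have hsub : (fun x : ℝ => (x : ℂ)) '' Set.univ ⊆ {x | pw.IsRoot x} := by
          rintro _ ⟨x, -, rfl⟩
          have := h (Fin.cons x w : Fin (m+1) → ℝ)
          have harg : (fun k : Fin (m+1) => (((Fin.cons x w : Fin (m+1) → ℝ) k : ℝ) : ℂ))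
              = Fin.cons ((x:ℝ):ℂ) (fun k => ((w k : ℝ):ℂ)) := by
            funext i
            induction i using Fin.cases <;> simp
          rw [harg, eval_eq_eval_mv_eval'] at this
          exact this
        apply Set.Infinite.mono hsub
        exact (Set.infinite_univ (α := ℝ)).image Complex.ofReal_injective.injOn
      have := congrArg (fun p => Polynomial.coeff p k) hpw0
      simpa [hpw, Polynomial.coeff_map] using this
    have := congrArg (finSuccEquiv ℂ m).symm hq
    simpa using this

/-- zero set of a nonzero complex polynomial map on real points is Lebesgue-null -/
lemma null_eval_real : ∀ {m : ℕ} (Q : MvPolynomial (Fin m) ℂ), Q ≠ 0 →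
    volume {w : Fin m → ℝ | eval (fun k => ((w k : ℝ) : ℂ)) Q = 0} = 0 := by
  intro m
  induction m with
  | zero =>
    intro Q hQ
    have : {w : Fin 0 → ℝ | eval (fun k => ((w k : ℝ) : ℂ)) Q = 0} = ∅ := by
      rw [Set.eq_empty_iff_forall_notMem]
      intro w hw
      apply hQ
      rw [eq_C_of_isEmpty Q] at hw ⊢
      simp only [Set.mem_setOf_eq, eval_C] at hw
      rw [hw, map_zero]
    rw [this, measure_empty]
  | succ m ih =>
    intro Q hQ
    set q := finSuccEquiv ℂ m Q with hqdef
    have hq0 : q ≠ 0 := by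
      intro h0
      apply hQ
      have hQq : Q = (finSuccEquiv ℂ m).symm q := by
        rw [hqdef, AlgEquiv.symm_apply_apply]
      rw [hQq, h0, map_zero]
    obtain ⟨k₀, hk₀⟩ : ∃ k, q.coeff k ≠ 0 := by
      by_contra h
      push_neg at h
      exact hq0 (Polynomial.ext fun k => by simp [h k])
    set s' : Set (ℝ × (Fin m → ℝ)) :=
      {p | eval (Fin.cons ((p.1 : ℝ) : ℂ) (fun k => ((p.2 k : ℝ) : ℂ))) Q = 0} with hs'
    have hcont : Continuous fun p : ℝ × (Fin m → ℝ) =>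
        eval (Fin.cons ((p.1 : ℝ) : ℂ) (fun k => ((p.2 k : ℝ) : ℂ))) Q := by
      apply (MvPolynomial.continuous_eval Q).comp
      apply continuous_pi
      intro i
      refine Fin.cases ?_ ?_ i
      · simp only [Fin.cons_zero]
        exact Complex.continuous_ofReal.comp continuous_fst
      · intro i
        simp only [Fin.cons_succ]
        exact Complex.continuous_ofReal.comp ((continuous_apply i).comp continuous_snd)
    have hs'meas : MeasurableSet s' := (isClosed_eq hcont continuous_const).measurableSet
    have hpre : {w : Fin (m+1) → ℝ | eval (fun k => ((w k : ℝ) : ℂ)) Q = 0}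
        = (MeasurableEquiv.piFinSuccAbove (fun _ => ℝ) 0) ⁻¹' s' := by
      ext w
      simp only [Set.mem_setOf_eq, Set.mem_preimage, hs', MeasurableEquiv.piFinSuccAbove]
      have harg : (fun k : Fin (m+1) => ((w k : ℝ) : ℂ))
          = Fin.cons ((w 0 : ℝ) : ℂ) (fun k => ((w k.succ : ℝ) : ℂ)) := by
        funext i
        refine Fin.cases ?_ ?_ i <;> simp
      rw [harg]
      exact Iff.rfl
    rw [hpre,
      (volume_preserving_piFinSuccAbove (fun _ : Fin (m+1) => ℝ) 0).measure_preimage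
        hs'meas.nullMeasurableSet]
    rw [Measure.volume_eq_prod, ← Measure.measurePreserving_swap.measure_preimage
      hs'meas.nullMeasurableSet]
    have hswapmeas : MeasurableSet (Prod.swap ⁻¹' s' : Set ((Fin m → ℝ) × ℝ)) :=
      hs'meas.preimage measurable_swap
    rw [MeasureTheory.Measure.measure_prod_null hswapmeas]
    have hN0 : volume {w : Fin m → ℝ | eval (fun k => ((w k : ℝ) : ℂ)) (q.coeff k₀) = 0} = 0 :=
      ih _ hk₀
    refine Filter.Eventually.mono (measure_eq_zero_iff_ae_notMem.mp hN0) ?_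
    intro w hw
    simp only [Pi.zero_apply]
    set pw := Polynomial.map (MvPolynomial.eval (fun k => ((w k : ℝ) : ℂ))) q with hpwdef
    have hpw0 : pw ≠ 0 := by
      intro h0
      apply hw
      have := congrArg (fun p => Polynomial.coeff p k₀) h0
      simpa [hpwdef, Polynomial.coeff_map] using this
    have hset : (Prod.mk w ⁻¹' (Prod.swap ⁻¹' s'))
        = (fun x : ℝ => (x : ℂ)) ⁻¹' {y : ℂ | pw.IsRoot y} := by
      ext x
      simp only [Set.mem_preimage, Prod.swap_prod_mk, hs', Set.mem_setOf_eq,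
        Polynomial.IsRoot]
      rw [eval_eq_eval_mv_eval']
    rw [hset]
    apply Set.Finite.measure_zero
    exact (Polynomial.finite_setOf_isRoot hpw0).preimage Complex.ofReal_injective.injOn

/-- homogeneous scaling -/
lemma homog_eval_mul {m d : ℕ} {P : MvPolynomial (Fin m) ℂ} (h : P.IsHomogeneous d)
    (c : ℂ) (z : Fin m → ℂ) :
    eval (fun i => c * z i) P = c ^ d * eval z P := by
  rw [eval_eq, eval_eq, Finset.mul_sum]
  refine Finset.sum_congr rfl fun mo hmo => ?_
  have hdeg : ∑ i ∈ mo.support, mo i = d := by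
    have hh := h (mem_support_iff.mp hmo)
    simpa [Finsupp.weight_apply, Finsupp.sum, smul_eq_mul] using hh
  calc P.coeff mo * ∏ i ∈ mo.support, (c * z i) ^ mo i
      = P.coeff mo * ((∏ i ∈ mo.support, c ^ mo i) * ∏ i ∈ mo.support, z i ^ mo i) := by
        rw [← Finset.prod_mul_distrib]
        simp_rw [mul_pow]
    _ = c ^ d * (P.coeff mo * ∏ i ∈ mo.support, z i ^ mo i) := by
        rw [Finset.prod_pow_eq_pow_sum, hdeg]
        ring


/-! ### The parametrization polynomials -/

def xP (n j k : ℕ) : MvPolynomial (Fin (n+j)) ℂ :=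
  if h : k < n+j then X ⟨k, h⟩ else 0

def TP (n j r : ℕ) : MvPolynomial (Fin (n+j)) ℂ := xP n j (j + r - 1)

def EP (n j r : ℕ) : MvPolynomial (Fin (n+j)) ℂ :=
  ∏ s ∈ Finset.Ico (r+1) (n+1), (1 - TP n j s)

def AP (n j : ℕ) (i : Fin (n+1)) : MvPolynomial (Fin (n+j)) ℂ :=
  if 1 ≤ (i:ℕ) ∧ (i:ℕ) ≤ j then
    xP n j ((i:ℕ) - 1) + C Complex.I * xP n j (j + (i:ℕ) - 1)
  else 0

def PhiP (n j : ℕ) (r : Fin (n+1)) : MvPolynomial (Fin (n+j)) ℂ :=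
  if (r:ℕ) = 0 then EP n j j - ∑ i : Fin (n+1), AP n j i
  else if (r:ℕ) ≤ j then AP n j r
  else TP n j r * EP n j r

lemma EP_succ (n j : ℕ) {q : ℕ} (hq : q < n) :
    EP n j q = (1 - TP n j (q+1)) * EP n j (q+1) := by
  unfold EP
  rw [Finset.prod_eq_prod_Ico_succ_bot (by omega : q+1 < n+1)]

lemma eval_xP {n j : ℕ} (v : Fin (n+j) → ℂ) {k : ℕ} (h : k < n+j) :
    eval v (xP n j k) = v ⟨k, h⟩ := by
  unfold xP
  rw [dif_pos h, eval_X]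

lemma EP_top (n j : ℕ) : EP n j n = 1 := by
  unfold EP
  rw [Finset.Ico_self, Finset.prod_empty]

/-- the core downward-induction lemma -/
lemma core (n j : ℕ) (hj : j ≤ n) (v : Fin (n+j) → ℂ) (z : Fin (n+1) → ℂ)
    (h1 : (∑ i, z i) = 1)
    (hA : ∀ i : Fin (n+1), 1 ≤ (i:ℕ) → (i:ℕ) ≤ j → eval v (AP n j i) = z i)
    (hT : ∀ r : Fin (n+1), j + 1 ≤ (r:ℕ) → z r = eval v (TP n j (r:ℕ)) * SIf z (r:ℕ)) :
    ∀ r, eval v (PhiP n j r) = z r := by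
  have hD : ∀ p, p ≤ n - j → SIf z (n - p) = eval v (EP n j (n - p)) := by
    intro p
    induction p with
    | zero =>
      intro _
      rw [Nat.sub_zero, SIf_top z, h1, EP_top, map_one]
    | succ p ih =>
      intro hp
      have hq1 : n - p = (n - (p+1)) + 1 := by omega
      set q := n - (p+1) with hqdef
      have hqn : q < n := by omega
      have hjq : j ≤ q := by omega
      have ihq : SIf z (q+1) = eval v (EP n j (q+1)) := by
        rw [← hq1]
        exact ih (by omega)
      have h2 : SIf z (q+1) = SIf z q + z ⟨q+1, by omega⟩ := SIf_succ z hqn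
      have hT' := hT ⟨q+1, by omega⟩ (by simp only [Fin.val_mk]; omega)
      simp only [Fin.val_mk] at hT'
      have hkey : SIf z q = (1 - eval v (TP n j (q+1))) * eval v (EP n j (q+1)) := by
        have e1 : SIf z q = SIf z (q+1) - z ⟨q+1, by omega⟩ := by
          rw [h2]; ring
        rw [e1, hT', ihq]
        ring
      show SIf z q = eval v (EP n j q)
      rw [hkey, EP_succ n j hqn, map_mul, map_sub, map_one]
  have hD' : ∀ q, j ≤ q → q ≤ n → SIf z q = eval v (EP n j q) := by
    intro q hjq hqn
    have := hD (n - q) (by omega)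
    rwa [show n - (n - q) = q by omega] at this
  intro r
  unfold PhiP
  by_cases h0 : (r:ℕ) = 0
  · rw [if_pos h0, map_sub]
    have hr0 : r = 0 := Fin.ext (by simpa using h0)
    have hSA : eval v (∑ i : Fin (n+1), AP n j i)
        = ∑ i : Fin (n+1), if 1 ≤ (i:ℕ) ∧ (i:ℕ) ≤ j then z i else 0 := by
      rw [map_sum]
      refine Finset.sum_congr rfl fun i _ => ?_
      by_cases hi : 1 ≤ (i:ℕ) ∧ (i:ℕ) ≤ j
      · rw [if_pos hi]
        exact hA i hi.1 hi.2
      · rw [if_neg hi]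
        unfold AP
        rw [if_neg hi, map_zero]
    rw [hSA, ← hD' j le_rfl hj, SIf_split0 z j, hr0]
    ring
  · rw [if_neg h0]
    by_cases hij : (r:ℕ) ≤ j
    · rw [if_pos hij]
      exact hA r (by omega) hij
    · rw [if_neg hij, map_mul]
      have hE : eval v (EP n j (r:ℕ)) = SIf z (r:ℕ) :=
        (hD' (r:ℕ) (by omega) (by omega)).symm
      rw [hE, ← hT r (by omega)]

/-- real points of `R` are in the image of the real parametrization -/
lemma surj_real (n j : ℕ) (hj : j ≤ n) (z : Fin (n+1) → ℂ)
    (h1 : (∑ i, z i) = 1)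
    (hz : ∀ r : Fin (n+1), j + 1 ≤ (r : ℕ) →
      ∃ t : ℝ, 0 ≤ t ∧ t ≤ 1 ∧ z r = (t : ℂ) * SIf z (r:ℕ)) :
    ∃ w : Fin (n+j) → ℝ, ∀ r, eval (fun k => ((w k : ℝ) : ℂ)) (PhiP n j r) = z r := by
  classical
  choose t ht0 ht1 hts using hz
  set tf : Fin (n+1) → ℝ := fun r => if h : j + 1 ≤ (r:ℕ) then t r h else 0 with htf
  have htfs : ∀ (r : Fin (n+1)) (h : j + 1 ≤ (r:ℕ)),
      z r = ((tf r : ℝ) : ℂ) * SIf z (r:ℕ) := by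
    intro r h
    rw [htf]
    simp only [dif_pos h]
    exact hts r h
  set w : Fin (n+j) → ℝ := fun k =>
    if h1 : (k:ℕ) < j then (z ⟨(k:ℕ)+1, by omega⟩).re
    else if h2 : (k:ℕ) < 2*j then (z ⟨(k:ℕ) - j + 1, by omega⟩).im
    else tf ⟨(k:ℕ) - j + 1, by omega⟩ with hw
  refine ⟨w, ?_⟩
  apply core n j hj _ z h1
  · -- the `a`-coordinates
    intro i hi1 hij
    unfold AP
    rw [if_pos ⟨hi1, hij⟩, map_add, map_mul, eval_C]
    have hb1 : (i:ℕ) - 1 < n + j := by omega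
    have hb2 : j + (i:ℕ) - 1 < n + j := by omega
    rw [eval_xP _ hb1, eval_xP _ hb2]
    have e1 : w ⟨(i:ℕ) - 1, hb1⟩ = (z i).re := by
      rw [hw]
      simp only [Fin.val_mk]
      rw [dif_pos (by omega)]
      rw [show (⟨(i:ℕ) - 1 + 1, by omega⟩ : Fin (n+1)) = i from
        Fin.ext (by simp only [Fin.val_mk]; omega)]
    have e2 : w ⟨j + (i:ℕ) - 1, hb2⟩ = (z i).im := by
      rw [hw]
      simp only [Fin.val_mk]
      rw [dif_neg (by omega), dif_pos (by omega)]
      rw [show (⟨j + (i:ℕ) - 1 - j + 1, by omega⟩ : Fin (n+1)) = i from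
        Fin.ext (by simp only [Fin.val_mk]; omega)]
    rw [e1, e2, mul_comm]
    exact Complex.re_add_im (z i)
  · -- the `t`-coordinates
    intro r hr
    have hb : j + (r:ℕ) - 1 < n + j := by omega
    unfold TP
    rw [eval_xP _ hb]
    have e3 : w ⟨j + (r:ℕ) - 1, hb⟩ = tf r := by
      rw [hw]
      simp only [Fin.val_mk]
      rw [dif_neg (by omega), dif_neg (by omega)]
      rw [show (⟨j + (r:ℕ) - 1 - j + 1, by omega⟩ : Fin (n+1)) = r from
        Fin.ext (by simp only [Fin.val_mk]; omega)]
    rw [e3]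
    exact htfs r hr

/-- complex points of the hyperplane with nonvanishing partial sums are in the image -/
lemma surj_cx (n j : ℕ) (hj : j ≤ n) (z : Fin (n+1) → ℂ)
    (h1 : (∑ i, z i) = 1)
    (hz : ∀ r : Fin (n+1), j + 1 ≤ (r:ℕ) → SIf z (r:ℕ) ≠ 0) :
    ∃ v : Fin (n+j) → ℂ, ∀ r, eval v (PhiP n j r) = z r := by
  classical
  set v : Fin (n+j) → ℂ := fun k =>
    if h1 : (k:ℕ) < j then z ⟨(k:ℕ)+1, by omega⟩
    else if h2 : (k:ℕ) < 2*j then 0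
    else z ⟨(k:ℕ) - j + 1, by omega⟩ / SIf z ((k:ℕ) - j + 1) with hv
  refine ⟨v, ?_⟩
  apply core n j hj _ z h1
  · intro i hi1 hij
    unfold AP
    rw [if_pos ⟨hi1, hij⟩, map_add, map_mul, eval_C]
    have hb1 : (i:ℕ) - 1 < n + j := by omega
    have hb2 : j + (i:ℕ) - 1 < n + j := by omega
    rw [eval_xP _ hb1, eval_xP _ hb2]
    have e1 : v ⟨(i:ℕ) - 1, hb1⟩ = z i := by
      rw [hv]
      simp only [Fin.val_mk]
      rw [dif_pos (by omega)]
      rw [show (⟨(i:ℕ) - 1 + 1, by omega⟩ : Fin (n+1)) = i from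
        Fin.ext (by simp only [Fin.val_mk]; omega)]
    have e2 : v ⟨j + (i:ℕ) - 1, hb2⟩ = 0 := by
      rw [hv]
      simp only [Fin.val_mk]
      rw [dif_neg (by omega), dif_pos (by omega)]
    rw [e1, e2, mul_zero, add_zero]
  · intro r hr
    have hb : j + (r:ℕ) - 1 < n + j := by omega
    unfold TP
    rw [eval_xP _ hb]
    have e3 : v ⟨j + (r:ℕ) - 1, hb⟩ = z r / SIf z (r:ℕ) := by
      rw [hv]
      simp only [Fin.val_mk]
      rw [dif_neg (by omega), dif_neg (by omega)]
      rw [show (⟨j + (r:ℕ) - 1 - j + 1, by omega⟩ : Fin (n+1)) = r from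
        Fin.ext (by simp only [Fin.val_mk]; omega)]
      rw [show j + (r:ℕ) - 1 - j + 1 = (r:ℕ) by omega]
    rw [e3, div_mul_cancel₀ _ (hz r hr)]

/-- if the composite of `P` with the parametrization vanishes identically (for complex
parameters), then the homogeneous polynomial `P` is zero -/
lemma bchain (n j : ℕ) (hj : j ≤ n) {d : ℕ} (P : MvPolynomial (Fin (n+1)) ℂ)
    (hhom : P.IsHomogeneous d)
    (hvan : ∀ v : Fin (n+j) → ℂ, eval (fun r => eval v (PhiP n j r)) P = 0) :
    P = 0 := by
  classical
  have B1 : ∀ z : Fin (n+1) → ℂ, (∑ i, z i) = 1 → eval z P = 0 := by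
    intro z hz
    set c : Fin (n+1) → ℂ :=
      fun i => (if (i:ℕ) = 0 then 1 else 0) - (if (i:ℕ) = n then 1 else 0) with hc
    have hSc : ∀ q : ℕ, q < n → SIf c q = 1 := by
      intro q hq
      rw [hc, SIf_sub, SIf_delta 0 q (by omega), SIf_delta n q le_rfl,
        if_pos (Nat.zero_le q), if_neg (by omega)]
      ring
    have hScn : SIf c n = 0 := by
      rw [hc, SIf_sub, SIf_delta 0 n (by omega), SIf_delta n n le_rfl,
        if_pos (Nat.zero_le n), if_pos le_rfl]
      ring
    set B : Finset ℂ := Finset.image (fun r : Fin (n+1) => - SIf z (r:ℕ)) Finset.univ with hB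
    have hTinf : Set.Infinite ((↑B : Set ℂ)ᶜ) := B.finite_toSet.infinite_compl
    set g : Fin (n+1) → Polynomial ℂ :=
      fun i => Polynomial.C (z i) + Polynomial.C (c i) * Polynomial.X with hg
    have hgev : ∀ s (i : Fin (n+1)), (g i).eval s = z i + c i * s := by
      intro s i
      simp [hg]
    have key : ∀ s ∈ ((↑B : Set ℂ)ᶜ), eval (fun i => (g i).eval s) P = 0 := by
      intro s hs
      have hzs1 : (∑ i, (z i + c i * s)) = 1 := by
        rw [Finset.sum_add_distrib, hz, ← Finset.sum_mul, ← SIf_top c, hScn, zero_mul, add_zero]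
      have hne : ∀ r : Fin (n+1), j + 1 ≤ (r:ℕ) → SIf (fun i => z i + c i * s) (r:ℕ) ≠ 0 := by
        intro r hr
        rw [SIf_line]
        rcases eq_or_lt_of_le (Nat.lt_succ_iff.mp r.isLt) with heq | hlt
        · rw [heq, hScn, zero_mul, add_zero, SIf_top z, hz]
          exact one_ne_zero
        · rw [hSc _ hlt, one_mul]
          intro h0
          apply hs
          have : s = - SIf z (r:ℕ) := by linear_combination h0
          rw [this]
          simp only [Finset.coe_image, Set.mem_image, Finset.coe_univ, Set.image_univ,
            Set.mem_range, hB]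
          exact ⟨r, rfl⟩
      obtain ⟨v, hv⟩ := surj_cx n j hj _ hzs1 hne
      have hvv := hvan v
      rw [show (fun r => eval v (PhiP n j r)) = fun i => z i + c i * s from funext hv] at hvv
      simp only [hgev]
      exact hvv
    have := eval_line_zero g P _ hTinf key 0
    simpa [hgev] using this
  have B2 : ∀ z : Fin (n+1) → ℂ, (∑ i, z i) ≠ 0 → eval z P = 0 := by
    intro z hz
    set σ : ℂ := ∑ i, z i with hσ
    have h1 : (∑ i, σ⁻¹ * z i) = 1 := by
      rw [← Finset.mul_sum, ← hσ, inv_mul_cancel₀ hz]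
    have h2 := B1 _ h1
    have h3 := homog_eval_mul hhom σ (fun i => σ⁻¹ * z i)
    rw [h2, mul_zero] at h3
    rw [show (fun i => σ * (σ⁻¹ * z i)) = z from funext fun i => by
      field_simp] at h3
    exact h3
  have B3 : ∀ z : Fin (n+1) → ℂ, eval z P = 0 := by
    intro z
    set g : Fin (n+1) → Polynomial ℂ :=
      fun i => Polynomial.C (z i)
        + Polynomial.C (if (i:ℕ) = 0 then 1 else 0) * Polynomial.X with hg
    have hgev : ∀ s (i : Fin (n+1)),
        (g i).eval s = z i + (if (i:ℕ) = 0 then 1 else 0) * s := by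
      intro s i
      simp only [hg, Polynomial.eval_add, Polynomial.eval_mul, Polynomial.eval_C,
        Polynomial.eval_X]
    have hδ : (∑ i : Fin (n+1), (if (i:ℕ) = 0 then (1:ℂ) else 0)) = 1 := by
      rw [← SIf_top, SIf_delta 0 n (by omega), if_pos (Nat.zero_le n)]
    have hinf : Set.Infinite ({-∑ i, z i}ᶜ : Set ℂ) :=
      (Set.finite_singleton _).infinite_compl
    have key : ∀ s ∈ ({-∑ i, z i}ᶜ : Set ℂ), eval (fun i => (g i).eval s) P = 0 := by
      intro s hs
      simp only [hgev]
      apply B2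
      rw [Finset.sum_add_distrib, ← Finset.sum_mul, hδ, one_mul]
      intro h0
      apply hs
      have : s = -∑ i, z i := by linear_combination h0
      simp [this]
    have := eval_line_zero g P _ hinf key 0
    simpa [hgev] using this
  apply MvPolynomial.funext
  intro x
  rw [B3 x, map_zero]

/-- polynomial evaluation is `C^1` over `ℝ` -/
lemma contDiff_eval {m : ℕ} (p : MvPolynomial (Fin m) ℂ) :
    ContDiff ℝ 1 (fun v : Fin m → ℂ => eval v p) := by
  induction p using MvPolynomial.induction_on with
  | C a => simpa using contDiff_const (c := a)
  | add p q hp hq =>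
    simp only [map_add]
    exact hp.add hq
  | mul_X p i hp =>
    simp only [map_mul, eval_X]
    exact hp.mul (ContinuousLinearMap.proj (R := ℝ) (φ := fun _ : Fin m => ℂ) i).contDiff

end

end Stmt4Aux

open Stmt4Aux MvPolynomial

/-- Every proper Zariski closed subset of `ℙ^n` (i.e. the zero set of a nonzero
homogeneous polynomial) has measure zero for the measure `‖R_{n,j}‖` associated to the
semi-algebraic current `⟦R_{n,j}⟧`, realized here (in the affine chart `Δ^n = {∑ z = 1}`)
as the `(n+j)`-dimensional Hausdorff measure restricted to `R_{n,j}`. -/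
theorem stmt_4 (n j : ℕ) (hj : j ≤ n)
    (R : Set (Fin (n+1) → ℂ))
    (hR : R = {z | (∑ i, z i) = 1 ∧
      ∀ r : Fin (n+1), j + 1 ≤ (r : ℕ) →
        ∃ t : ℝ, 0 ≤ t ∧ t ≤ 1 ∧
          z r = (t : ℂ) * ∑ i : Fin (n+1), if (i : ℕ) ≤ (r : ℕ) then z i else 0}) :
    ∀ (d : ℕ) (P : MvPolynomial (Fin (n+1)) ℂ), P.IsHomogeneous d → P ≠ 0 →
      (μH[((n + j : ℕ) : ℝ)] : Measure (Fin (n+1) → ℂ)).restrict R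
        {z | MvPolynomial.eval z P = 0} = 0 := by

  classical
  intro d P hhom hP0
  -- the composite polynomial
  set Qc : MvPolynomial (Fin (n+j)) ℂ := MvPolynomial.eval₂ C (PhiP n j) P with hQc
  -- the parametrizing map
  set φ : (Fin (n+j) → ℝ) → (Fin (n+1) → ℂ) :=
    fun w r => eval (fun k => ((w k : ℝ) : ℂ)) (PhiP n j r) with hφ
  -- `Qc` is nonzero
  have hQc0 : Qc ≠ 0 := by
    intro h0
    apply hP0
    apply bchain n j hj P hhom
    intro v
    have := eval_comp (PhiP n j) P v
    rw [← hQc, h0, map_zero] at this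
    exact this.symm
  -- the zero set of `Qc` on real points is null
  set A : Set (Fin (n+j) → ℝ) :=
    {w | eval (fun k => ((w k : ℝ) : ℂ)) Qc = 0} with hA
  have hAnull : volume A = 0 := null_eval_real Qc hQc0
  have hAH : (μH[((n + j : ℕ) : ℝ)] : Measure (Fin (n+j) → ℝ)) A = 0 := by
    have hcast : ((n + j : ℕ) : ℝ) = ((Fintype.card (Fin (n+j)) : ℕ) : ℝ) := by simp
    rw [hcast, hausdorffMeasure_pi_real]
    exact hAnull
  -- `φ` is locally Lipschitz
  have hsm : ContDiff ℝ 1 φ := by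
    apply contDiff_pi.mpr
    intro r
    have hL : ContDiff ℝ 1 (fun w : Fin (n+j) → ℝ => (fun k => ((w k : ℝ) : ℂ))) := by
      apply contDiff_pi.mpr
      intro k
      exact Complex.ofRealCLM.contDiff.comp
        (ContinuousLinearMap.proj (R := ℝ) (φ := fun _ : Fin (n+j) => ℝ) k).contDiff
    exact (contDiff_eval (PhiP n j r)).comp hL
  have hll : LocallyLipschitz φ := hsm.locallyLipschitz
  choose K t ht hK using hll
  obtain ⟨c, hcc, hcov⟩ := TopologicalSpace.countable_cover_nhds ht
  -- the image of `A` is null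
  have himg : (μH[((n + j : ℕ) : ℝ)] : Measure (Fin (n+1) → ℂ)) (φ '' A) = 0 := by
    have hsub : φ '' A ⊆ ⋃ x ∈ c, φ '' (A ∩ t x) := by
      rintro _ ⟨w, hwA, rfl⟩
      have hmem : w ∈ ⋃ x ∈ c, t x := by
        rw [hcov]
        exact Set.mem_univ w
      obtain ⟨x, hx, hwx⟩ := Set.mem_iUnion₂.mp hmem
      exact Set.mem_iUnion₂.mpr ⟨x, hx, Set.mem_image_of_mem _ ⟨hwA, hwx⟩⟩
    apply measure_mono_null hsub
    apply (measure_biUnion_null_iff hcc).mpr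
    intro x _
    have hle := ((hK x).mono (show A ∩ t x ⊆ t x from Set.inter_subset_right)).hausdorffMeasure_image_le
      (show (0:ℝ) ≤ ((n + j : ℕ) : ℝ) from Nat.cast_nonneg _)
    refine le_antisymm (hle.trans ?_) (by positivity)
    have : (μH[((n + j : ℕ) : ℝ)] : Measure (Fin (n+j) → ℝ)) (A ∩ t x) = 0 :=
      measure_mono_null Set.inter_subset_left hAH
    rw [this, mul_zero]
  -- conclude
  have hZmeas : MeasurableSet {z : Fin (n+1) → ℂ | eval z P = 0} :=
    (isClosed_eq (MvPolynomial.continuous_eval P) continuous_const).measurableSet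
  rw [Measure.restrict_apply hZmeas]
  apply measure_mono_null _ himg
  rintro z ⟨hzP, hzR⟩
  rw [hR] at hzR
  obtain ⟨hz1, hz2⟩ := hzR
  obtain ⟨w, hw⟩ := surj_real n j hj z hz1 hz2
  refine ⟨w, ?_, funext hw⟩
  rw [hA, Set.mem_setOf_eq, hQc, eval_comp,
    show (fun r => eval (fun k => ((w k : ℝ) : ℂ)) (PhiP n j r)) = z from funext hw]
  exact hzP
end

section
/- Let p ∈ F[t_1,...,t_n], F ⊂ ℂ, and consider the affine simplex Δ^{n+1} = {z ∈ ℂ^{n+2} : z_0 + ··· + z_{n+1} = 1}. Define ψ : Δ^{n+1} − Y_p → U_p by ψ(z) = (t(z); (z_{n+1}/(1 − z_{n+1})) p(t(z))) with t(z) = (ε_0(z)/z_1, ..., ε_{n-1}(z)/z_n), and define φ : U_p − 𝒢_p → Δ^{n+1} by z_0(t;λ) = (∏_{r=1}^n t_r/(1+t_r)) · p(t)/(p(t)+λ), z_j(t;λ) = (1/(1+t_j)) (∏_{r=j+1}^n t_r/(1+t_r)) · p(t)/(p(t)+λ) for 1 ≤ j ≤ n, and z_{n+1}(t;λ) = λ/(p(t)+λ).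 Then φ is a two-sided inverse of ψ onto its image: ψ ∘ φ = id on U_p − 𝒢_p and φ ∘ ψ = id on Δ^{n+1} − Y_p; in particular the image of ψ is U_p − 𝒢_p. -/
open MvPolynomial

private lemma aux_prod_if (n j : ℕ) (f : ℕ → ℂ) :
    (∏ k : Fin n, if j ≤ (k : ℕ) then f (k : ℕ) else 1) = ∏ k ∈ Finset.Ico j n, f k := by
  rw [Fin.prod_univ_eq_prod_range (fun k => if j ≤ k then f k else 1) n, ← Finset.prod_filter]
  congr 1
  ext k
  simp only [Finset.mem_filter, Finset.mem_Ico, Finset.mem_range]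
  omega

private lemma aux_prod_fin {n : ℕ} (ft : Fin n → ℂ) (fn : ℕ → ℂ)
    (h : ∀ k : Fin n, fn (k : ℕ) = ft k) (j : ℕ) :
    (∏ k : Fin n, if j ≤ (k : ℕ) then ft k else 1) = ∏ k ∈ Finset.Ico j n, fn k := by
  rw [← aux_prod_if n j fn]
  exact Finset.prod_congr rfl fun k _ => by by_cases hk : j ≤ (k:ℕ) <;> simp [hk, h k]

private lemma aux_sum_if (N m : ℕ) (hm : m < N) (f : ℕ → ℂ) :
    (∑ i : Fin N, if (i : ℕ) ≤ m then f (i : ℕ) else 0) = ∑ i ∈ Finset.range (m+1), f i := by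
  rw [Fin.sum_univ_eq_sum_range (fun i => if i ≤ m then f i else 0) N, ← Finset.sum_filter]
  congr 1
  ext k
  simp only [Finset.mem_filter, Finset.mem_range]
  omega

private lemma aux_sum_fin {N : ℕ} (z : Fin N → ℂ) (fn : ℕ → ℂ)
    (h : ∀ i : Fin N, fn (i : ℕ) = z i) (m : ℕ) (hm : m < N) :
    (∑ i : Fin N, if (i : ℕ) ≤ m then z i else 0) = ∑ i ∈ Finset.range (m+1), fn i := by
  rw [← aux_sum_if N m hm fn]
  exact Finset.sum_congr rfl fun i _ => by by_cases hi : (i:ℕ) ≤ m <;> simp [hi, h i]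

private lemma aux_telescope (g : ℕ → ℂ) (a b : ℕ) (hab : a ≤ b)
    (hg : ∀ k, k ≤ b → g k ≠ 0) :
    (∏ k ∈ Finset.Ico a b, (g k / g (k+1))) = g a / g b := by
  induction b, hab using Nat.le_induction with
  | base => simp [div_self (hg a le_rfl)]
  | succ b hab ih =>
      rw [Finset.prod_Ico_succ_top hab, ih (fun k hk => hg k (by omega)),
        div_mul_div_comm, mul_comm (g a) (g b), mul_div_mul_left _ _ (hg b (by omega))]

/-- The explicit map `φ` is a two-sided inverse of
`ψ(z) = (t(z); (z_{n+1}/(1−z_{n+1}))p(t(z)))` between `U_p − 𝒢_p` (the set `A`) and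
`Δ^{n+1} − Y_p` (the set `B`, described by `∑ z = 1`, `z_i ≠ 0`, `ε_k(z) ≠ 0`, and
`p(t(z)) ≠ 0`); in particular the image of `ψ` is `U_p − 𝒢_p`. -/
theorem stmt_10 (n : ℕ) (p : MvPolynomial (Fin n) ℂ)
    (eps : Fin (n+2) → (Fin (n+2) → ℂ) → ℂ)
    (heps : ∀ k z, eps k z = ∑ i : Fin (n+2), if (i : ℕ) ≤ (k : ℕ) then z i else 0)
    (tz : (Fin (n+2) → ℂ) → Fin n → ℂ)
    (htz : ∀ z k, tz z k =
      (∑ i : Fin (n+2), if (i : ℕ) ≤ (k : ℕ) then z i else 0) /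
        z ⟨(k : ℕ) + 1, by have := k.isLt; omega⟩)
    (ψ : (Fin (n+2) → ℂ) → (Fin n → ℂ) × ℂ)
    (hψ : ∀ z, ψ z = (tz z,
      z ⟨n+1, by omega⟩ / (1 - z ⟨n+1, by omega⟩) * eval (tz z) p))
    (φ : (Fin n → ℂ) × ℂ → Fin (n+2) → ℂ)
    (hφ : ∀ x (i : Fin (n+2)), φ x i =
      if _h0 : (i : ℕ) = 0 then
        (∏ k : Fin n, x.1 k / (1 + x.1 k)) * (eval x.1 p / (eval x.1 p + x.2))
      else if _h : (i : ℕ) ≤ n then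
        (1 / (1 + x.1 ⟨(i : ℕ) - 1, by omega⟩)) *
          (∏ k : Fin n, if (i : ℕ) ≤ (k : ℕ) then x.1 k / (1 + x.1 k) else 1) *
          (eval x.1 p / (eval x.1 p + x.2))
      else x.2 / (eval x.1 p + x.2))
    (A : Set ((Fin n → ℂ) × ℂ))
    (hA : A = {x | (∀ i, x.1 i ≠ 0) ∧ eval x.1 p ≠ 0 ∧ x.2 ≠ 0 ∧
      (∀ i, 1 + x.1 i ≠ 0) ∧ eval x.1 p + x.2 ≠ 0})
    (B : Set (Fin (n+2) → ℂ))
    (hB : B = {z | (∑ i, z i) = 1 ∧ (∀ i, z i ≠ 0) ∧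
      (∀ k, eps k z ≠ 0) ∧ eval (tz z) p ≠ 0}) :
    (∀ x ∈ A, φ x ∈ B ∧ ψ (φ x) = x) ∧ (∀ z ∈ B, ψ z ∈ A ∧ φ (ψ z) = z) := by
  constructor
  · rintro ⟨t, lam⟩ hx
    rw [hA] at hx
    obtain ⟨ht0, hp0, hl0, ht1, hpl⟩ := hx
    replace ht0 : ∀ i, t i ≠ 0 := ht0
    replace hp0 : eval t p ≠ 0 := hp0
    replace hl0 : lam ≠ 0 := hl0
    replace ht1 : ∀ i, 1 + t i ≠ 0 := ht1
    replace hpl : eval t p + lam ≠ 0 := hpl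
    set T : ℕ → ℂ := fun k => if h : k < n then t ⟨k, h⟩ else 0 with hTdef
    have hT : ∀ k : Fin n, T (k : ℕ) = t k := fun k => by simp [hTdef, k.isLt]
    have hT0 : ∀ k, k < n → T k ≠ 0 := fun k hk => by
      simpa [hTdef, hk] using ht0 ⟨k, hk⟩
    have hT1 : ∀ k, k < n → 1 + T k ≠ 0 := fun k hk => by
      simpa [hTdef, hk] using ht1 ⟨k, hk⟩
    have hP0 : eval t p / (eval t p + lam) ≠ 0 := div_ne_zero hp0 hpl
    set f : ℕ → ℂ := fun k => T k / (1 + T k) with hfdef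
    have hfval : ∀ k, f k = T k / (1 + T k) := fun k => rfl
    have hf0 : ∀ k, k < n → f k ≠ 0 := fun k hk => div_ne_zero (hT0 k hk) (hT1 k hk)
    set π : ℕ → ℂ := fun j => ∏ k ∈ Finset.Ico j n, f k with hπdef
    have hπval : ∀ j, π j = ∏ k ∈ Finset.Ico j n, f k := fun j => rfl
    have hπ0 : ∀ j, π j ≠ 0 := by
      intro j
      rw [hπval]
      exact Finset.prod_ne_zero_iff.2 fun k hk => hf0 k (Finset.mem_Ico.1 hk).2
    have hπn : π n = 1 := by simp [hπval]
    have hπs : ∀ j, j < n → π j = f j * π (j+1) := fun j hj => by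
      rw [hπval, hπval]; exact Finset.prod_eq_prod_Ico_succ_bot hj _
    have hcompat : ∀ k : Fin n, f (k : ℕ) = t k / (1 + t k) := fun k => by
      rw [hfval, hT k]
    set Z : ℕ → ℂ := fun i => if h : i < n + 2 then φ (t, lam) ⟨i, h⟩ else 0 with hZdef
    have hZcoe : ∀ i : Fin (n+2), Z (i : ℕ) = φ (t, lam) i := fun i => by
      simp [hZdef, i.isLt]
    have hZval : ∀ m, ∀ hm : m < n + 2, Z m =
        if m = 0 then π 0 * (eval t p / (eval t p + lam))
        else if m ≤ n then (1 / (1 + T (m-1))) * π m * (eval t p / (eval t p + lam))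
        else lam / (eval t p + lam) := by
      intro m hm
      have : Z m = φ (t, lam) ⟨m, hm⟩ := by simp [hZdef, hm]
      rw [this, hφ]
      dsimp only
      split_ifs with h0 h1
      · rw [hπval]
        rw [show (∏ k : Fin n, t k / (1 + t k))
            = ∏ k : Fin n, if 0 ≤ (k : ℕ) then t k / (1 + t k) else 1 by
          exact Finset.prod_congr rfl fun k _ => by simp]
        rw [aux_prod_fin (fun k => t k / (1 + t k)) f hcompat 0]
      · have hm1 : m - 1 < n := by omega
        rw [aux_prod_fin (fun k => t k / (1 + t k)) f hcompat m, hπval,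
          show t ⟨m - 1, hm1⟩ = T (m - 1) from (hT ⟨m - 1, hm1⟩).symm]
      · rfl
    set S : ℕ → ℂ := fun m => ∑ i ∈ Finset.range m, Z i with hSdef
    have hSrec : ∀ m, S (m+1) = S m + Z m := fun m => Finset.sum_range_succ Z m
    have hS0 : S 0 = 0 := by simp [hSdef]
    have hSkey : ∀ m, m ≤ n → S (m+1) = π m * (eval t p / (eval t p + lam)) := by
      intro m hm
      induction m with
      | zero => rw [hSrec, hS0, zero_add, hZval 0 (by omega), if_pos rfl]
      | succ m ih =>
        rw [hSrec, ih (by omega), hZval (m+1) (by omega), if_neg (by omega),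
          if_pos (by omega), Nat.add_sub_cancel, hπs m (by omega), hfval]
        have h1 := hT1 m (by omega)
        field_simp
        ring
    have hStot : S (n+2) = 1 := by
      rw [hSrec, hSkey n le_rfl, hπn, hZval (n+1) (by omega), if_neg (by omega),
        if_neg (by omega), one_mul, ← add_div, div_self hpl]
    have heval_sum : ∀ m, m ≤ n + 1 →
        (∑ i : Fin (n+2), if (i : ℕ) ≤ m then φ (t, lam) i else 0) = S (m+1) := by
      intro m hm
      exact aux_sum_fin (φ (t, lam)) Z hZcoe m (by omega)
    have htzφ : tz (φ (t, lam)) = t := by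
      funext k
      rw [htz, heval_sum (k : ℕ) (by have := k.isLt; omega),
        ← hZcoe ⟨(k : ℕ) + 1, by have := k.isLt; omega⟩]
      have hkn := k.isLt
      have : Z ((k : ℕ) + 1) = (1 / (1 + T (k : ℕ))) * π ((k : ℕ)+1) *
          (eval t p / (eval t p + lam)) := by
        rw [hZval ((k : ℕ)+1) (by omega), if_neg (by omega), if_pos (by omega),
          Nat.add_sub_cancel]
      rw [show ((⟨(k : ℕ) + 1, by omega⟩ : Fin (n+2)) : ℕ) = (k : ℕ) + 1 from rfl, this,
        hSkey (k : ℕ) (by omega), hπs (k : ℕ) hkn, hfval, ← hT k]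
      have h1 := hT1 (k : ℕ) hkn
      have h2 := hπ0 ((k : ℕ) + 1)
      field_simp
    have hsumtot : (∑ i, φ (t, lam) i) = 1 := by
      calc (∑ i : Fin (n+2), φ (t, lam) i) = ∑ i : Fin (n+2), Z (i : ℕ) :=
            Finset.sum_congr rfl fun i _ => (hZcoe i).symm
        _ = S (n+2) := Fin.sum_univ_eq_sum_range Z (n+2)
        _ = 1 := hStot
    constructor
    · rw [hB]
      refine ⟨hsumtot, ?_, ?_, ?_⟩
      · intro i
        rw [← hZcoe i, hZval (i : ℕ) i.isLt]
        split_ifs with h0 h1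
        · exact mul_ne_zero (hπ0 0) hP0
        · exact mul_ne_zero (mul_ne_zero (one_div_ne_zero (hT1 _ (by omega))) (hπ0 _)) hP0
        · exact div_ne_zero hl0 hpl
      · intro k
        rw [heps, heval_sum (k : ℕ) (by have := k.isLt; omega)]
        by_cases hk : (k : ℕ) ≤ n
        · rw [hSkey (k : ℕ) hk]
          exact mul_ne_zero (hπ0 _) hP0
        · have : (k : ℕ) = n + 1 := by have := k.isLt; omega
          rw [this, hStot]
          exact one_ne_zero
      · rw [htzφ]; exact hp0
    · rw [hψ, htzφ]
      have hn1 : φ (t, lam) ⟨n+1, by omega⟩ = lam / (eval t p + lam) := by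
        rw [← hZcoe ⟨n+1, by omega⟩, hZval (n+1) (by omega), if_neg (by omega),
          if_neg (by omega)]
      rw [hn1]
      have : lam / (eval t p + lam) / (1 - lam / (eval t p + lam)) * eval t p = lam := by
        have h1 : (1 : ℂ) - lam / (eval t p + lam) = eval t p / (eval t p + lam) := by
          field_simp
          ring
        rw [h1]
        field_simp
      rw [this]
  · intro z hz
    rw [hB] at hz
    obtain ⟨hsum, hz0, heps0, hpz⟩ := hz
    set Z : ℕ → ℂ := fun i => if h : i < n + 2 then z ⟨i, h⟩ else 0 with hZdef
    have hZcoe : ∀ i : Fin (n+2), Z (i : ℕ) = z i := fun i => by simp [hZdef, i.isLt]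
    set S : ℕ → ℂ := fun m => ∑ i ∈ Finset.range m, Z i with hSdef
    have hSrec : ∀ m, S (m+1) = S m + Z m := fun m => Finset.sum_range_succ Z m
    have hepsS : ∀ k : Fin (n+2), eps k z = S ((k : ℕ) + 1) := fun k => by
      rw [heps]; exact aux_sum_fin z Z hZcoe (k : ℕ) k.isLt
    have hS0 : ∀ m, m ≤ n + 1 → S (m+1) ≠ 0 := fun m hm => by
      have h := heps0 ⟨m, by omega⟩
      rwa [hepsS ⟨m, by omega⟩] at h
    have hZ0 : ∀ m, m < n + 2 → Z m ≠ 0 := fun m hm => by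
      have h := hz0 ⟨m, hm⟩
      rw [← hZcoe ⟨m, hm⟩] at h
      exact h
    have hStot : S (n+2) = 1 := by
      calc S (n+2) = ∑ i : Fin (n+2), Z (i : ℕ) := (Fin.sum_univ_eq_sum_range Z (n+2)).symm
        _ = ∑ i : Fin (n+2), z i := Finset.sum_congr rfl fun i _ => hZcoe i
        _ = 1 := hsum
    have hSn1 : S (n+1) + Z (n+1) = 1 := by rw [← hSrec]; exact hStot
    have htzS : ∀ k : Fin n, tz z k = S ((k : ℕ) + 1) / Z ((k : ℕ) + 1) := fun k => by
      rw [htz, aux_sum_fin z Z hZcoe (k : ℕ) (by have := k.isLt; omega),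
        ← hZcoe ⟨(k : ℕ) + 1, by have := k.isLt; omega⟩]
    have ht0 : ∀ k : Fin n, tz z k ≠ 0 := fun k => by
      rw [htzS k]
      exact div_ne_zero (hS0 (k : ℕ) (by have := k.isLt; omega))
        (hZ0 ((k : ℕ) + 1) (by have := k.isLt; omega))
    have h1t : ∀ k : Fin n, 1 + tz z k = S ((k : ℕ) + 2) / Z ((k : ℕ) + 1) := fun k => by
      have hkn := k.isLt
      rw [htzS k]
      have h1 : Z ((k : ℕ) + 1) ≠ 0 := hZ0 _ (by omega)
      have h2 : S ((k : ℕ) + 2) = S ((k : ℕ) + 1) + Z ((k : ℕ) + 1) := hSrec _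
      field_simp
      linear_combination -h2
    have h1t0 : ∀ k : Fin n, 1 + tz z k ≠ 0 := fun k => by
      rw [h1t k]
      exact div_ne_zero (hS0 ((k : ℕ) + 1) (by have := k.isLt; omega))
        (hZ0 _ (by have := k.isLt; omega))
    have hSn1' : S (n+1) ≠ 0 := hS0 n (by omega)
    have hZn1' : Z (n+1) ≠ 0 := hZ0 (n+1) (by omega)
    have hψz : ψ z = (tz z, Z (n+1) / S (n+1) * eval (tz z) p) := by
      rw [hψ]
      have h1 : z ⟨n+1, by omega⟩ = Z (n+1) := (hZcoe ⟨n+1, by omega⟩).symm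
      have hone : (1 : ℂ) - Z (n+1) = S (n+1) := by linear_combination hSn1.symm
      rw [h1, hone]
    have hlam0 : Z (n+1) / S (n+1) * eval (tz z) p ≠ 0 :=
      mul_ne_zero (div_ne_zero hZn1' hSn1') hpz
    have hplS : eval (tz z) p + Z (n+1) / S (n+1) * eval (tz z) p
        = eval (tz z) p / S (n+1) := by
      field_simp
      linear_combination hSn1
    have hpl0 : eval (tz z) p + Z (n+1) / S (n+1) * eval (tz z) p ≠ 0 := by
      rw [hplS]; exact div_ne_zero hpz hSn1'
    have hP' : eval (tz z) p / (eval (tz z) p + Z (n+1) / S (n+1) * eval (tz z) p)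
        = S (n+1) := by
      rw [hplS]
      field_simp
    have hcompat : ∀ k : Fin n,
        (fun m => S (m+1) / S (m+2)) (k : ℕ) = tz z k / (1 + tz z k) := fun k => by
      have hkn := k.isLt
      dsimp only
      rw [h1t k, htzS k]
      have h1 : Z ((k : ℕ) + 1) ≠ 0 := hZ0 _ (by omega)
      have h2 : S ((k : ℕ) + 1) ≠ 0 := hS0 _ (by omega)
      have h3 : S ((k : ℕ) + 2) ≠ 0 := hS0 ((k : ℕ) + 1) (by omega)
      field_simp
    have hprod : ∀ j, j ≤ n →
        (∏ k : Fin n, if j ≤ (k : ℕ) then tz z k / (1 + tz z k) else 1)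
          = S (j+1) / S (n+1) := by
      intro j hj
      rw [aux_prod_fin (fun k => tz z k / (1 + tz z k)) (fun m => S (m+1) / S (m+2))
        hcompat j]
      exact aux_telescope (fun m => S (m+1)) j n hj (fun k hk => hS0 k (by omega))
    have hS1 : S 1 = Z 0 := by rw [hSrec]; simp [hSdef]
    constructor
    · rw [hψz, hA]
      exact ⟨ht0, hpz, hlam0, h1t0, hpl0⟩
    · rw [hψz]
      funext i
      obtain ⟨m, hm⟩ := i
      rw [← hZcoe ⟨m, hm⟩, hφ]
      dsimp only
      split_ifs with h0 h1
      · subst h0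
        rw [show (∏ k : Fin n, tz z k / (1 + tz z k))
            = ∏ k : Fin n, if 0 ≤ (k : ℕ) then tz z k / (1 + tz z k) else 1 from
          Finset.prod_congr rfl fun k _ => by simp]
        rw [hprod 0 (by omega), hP', hS1, div_mul_cancel₀ _ hSn1']
      · obtain ⟨j, rfl⟩ : ∃ j, m = j + 1 := ⟨m - 1, by omega⟩
        rw [hprod (j+1) h1, hP']
        simp only [Nat.add_sub_cancel]
        have hjn : j < n := by omega
        rw [h1t ⟨j, hjn⟩]
        dsimp only
        have h2 : S (j + 2) ≠ 0 := hS0 (j+1) (by omega)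
        have h3 : Z (j + 1) ≠ 0 := hZ0 _ (by omega)
        field_simp
      · have : m = n + 1 := by omega
        subst this
        rw [hplS]
        field_simp
end
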